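/- Let (V, μ) be a connected locally finite weighted graph with μ(x) ≥ b > 0 for all x, and 1 < p ≤ 2 with conjugate exponent q. Then g_q(o,o) ≥ ∑_{n=0}^∞ ( ∑_{m=n}^∞ p_m(o,o) )^{q−1}, where p_m(o,o) is the on-diagonal heat kernel. -/

import Mathlib

open scoped ENNReal

/-- Vertex weight `μ(x) = ∑_y μ_{xy}` of a weighted graph. -/
noncomputable def vertexWeight {V : Type*} (μ : V → V → ℝ≥0∞) (x : V) : ℝ≥0∞ := ∑' y, μ x y

/-- Transition kernel `P(x,y) = μ_{xy}/μ(x)` of the random walk. -/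
noncomputable def transKer {V : Type*} (μ : V → V → ℝ≥0∞) (x y : V) : ℝ≥0∞ :=
  μ x y / vertexWeight μ x

open Classical in
/-- Transition kernel of the walk killed on exiting `U`. -/
noncomputable def killedKer {V : Type*} (μ : V → V → ℝ≥0∞) (U : Set V) (x y : V) : ℝ≥0∞ :=
  if x ∈ U ∧ y ∈ U then transKer μ x y else 0

open Classical in
/-- `n`-step iterates `P^U_n` of the killed kernel, with `P^U_0 = I_U`. -/
noncomputable def killedKerN {V : Type*} (μ : V → V → ℝ≥0∞) (U : Set V) : ℕ → V → V → ℝ≥0∞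
  | 0 => fun x y => if x = y ∧ x ∈ U then 1 else 0
  | n + 1 => fun x y => ∑' z, killedKer μ U x z * killedKerN μ U n z y

/-- Killed Green function `g^U(x,y) = ∑_n P^U_n(x,y)/μ(y)`. -/
noncomputable def greenKilled {V : Type*} (μ : V → V → ℝ≥0∞) (U : Set V) (x y : V) : ℝ≥0∞ :=
  ∑' n, killedKerN μ U n x y / vertexWeight μ y

/-- Green function `g(x,y) = ∑_n pₙ(x,y)` of the graph. -/
noncomputable def green {V : Type*} (μ : V → V → ℝ≥0∞) (x y : V) : ℝ≥0∞ :=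
  greenKilled μ Set.univ x y

/-- Killed Green operator `G^U f(x) = ∑_{y∈U} g^U(x,y) f(y) μ(y)`. -/
noncomputable def greenOp {V : Type*} (μ : V → V → ℝ≥0∞) (U : Set V) (f : V → ℝ≥0∞) (x : V) :
    ℝ≥0∞ :=
  ∑' y, greenKilled μ U x y * f y * vertexWeight μ y

/-- The `L^q`-Green function `g_q(x,y) = ∑_z g(x,z) g(z,y)^{q-1} μ(z)`. -/
noncomputable def greenQ {V : Type*} (μ : V → V → ℝ≥0∞) (q : ℝ) (x y : V) : ℝ≥0∞ :=
  ∑' z, green μ x z * green μ z y ^ (q - 1) * vertexWeight μ z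

/-- The `μ`-weighted `L^q(U)` norm. -/
noncomputable def lqNorm {V : Type*} (μ : V → V → ℝ≥0∞) (U : Set V) (q : ℝ) (h : V → ℝ≥0∞) :
    ℝ≥0∞ :=
  (∑' x, U.indicator (fun x => h x ^ q * vertexWeight μ x) x) ^ (1 / q)

/-- The `L^p`-capacity `C_p(K,U)`:
`sup { ν(K)^p : ν = fμ, f ∈ ℓ⁺(K), ‖G^U f‖_{L^q(U)} ≤ 1 }`, `1/p + 1/q = 1`. -/
noncomputable def lpCap {V : Type*} (μ : V → V → ℝ≥0∞) (p q : ℝ) (K : Finset V) (U : Set V) :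
    ℝ≥0∞ :=
  ⨆ f ∈ {f : V → ℝ≥0∞ | (∀ x, x ∉ K → f x = 0) ∧ lqNorm μ U q (greenOp μ U f) ≤ 1},
    (∑ x ∈ K, f x * vertexWeight μ x) ^ p

/-- A weighted graph is locally finite if every vertex has finitely many neighbours. -/
def LocallyFinite' {V : Type*} (μ : V → V → ℝ≥0∞) : Prop :=
  ∀ x, (Function.support (μ x)).Finite


section Aux
open Classical
variable {V : Type*} (μ : V → V → ℝ≥0∞)

lemma finsetJensen {ι : Type*} (s : Finset ι) (w a : ι → ℝ≥0∞)
    (hw : ∑ i ∈ s, w i ≤ 1) {r : ℝ} (hr : 1 ≤ r) :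
    (∑ i ∈ s, w i * a i) ^ r ≤ ∑ i ∈ s, w i * a i ^ r := by
  have hr0 : (0:ℝ) ≤ r := zero_le_one.trans hr
  set t := ∑ i ∈ s, w i with ht
  rcases eq_or_ne t 0 with h0 | h0
  · have hz : ∀ i ∈ s, w i = 0 := fun i hi =>
      le_antisymm (h0 ▸ Finset.single_le_sum (fun j _ => zero_le) hi) zero_le
    have hS : ∑ i ∈ s, w i * a i = 0 := Finset.sum_eq_zero fun i hi => by rw [hz i hi, zero_mul]
    rw [hS, ENNReal.zero_rpow_of_pos (lt_of_lt_of_le zero_lt_one hr)]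
    exact zero_le
  · have htop : t ≠ ⊤ := ne_top_of_le_ne_top ENNReal.one_ne_top hw
    have hsum : ∑ i ∈ s, w i / t = 1 := by
      simp only [div_eq_mul_inv, ← Finset.sum_mul]
      rw [← ht, ← div_eq_mul_inv, ENNReal.div_self h0 htop]
    have hkey := ENNReal.rpow_arith_mean_le_arith_mean_rpow s (fun i => w i / t) a hsum hr
    have hL : ∀ (f : ι → ℝ≥0∞), ∑ i ∈ s, (w i / t) * f i = (∑ i ∈ s, w i * f i) * t⁻¹ := by
      intro f
      rw [Finset.sum_mul]
      exact Finset.sum_congr rfl fun i _ => by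
        rw [div_eq_mul_inv, mul_right_comm]
    rw [hL a, hL (fun i => a i ^ r)] at hkey
    have hmul : ((∑ i ∈ s, w i * a i) * t⁻¹) ^ r
        = (∑ i ∈ s, w i * a i) ^ r * (t⁻¹) ^ r :=
      ENNReal.mul_rpow_of_nonneg _ _ hr0
    rw [hmul] at hkey
    calc (∑ i ∈ s, w i * a i) ^ r
        = (∑ i ∈ s, w i * a i) ^ r * ((t⁻¹) ^ r * (t ^ r)) := by
          rw [← ENNReal.mul_rpow_of_nonneg _ _ hr0, ENNReal.inv_mul_cancel h0 htop,
            ENNReal.one_rpow, mul_one]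
      _ = ((∑ i ∈ s, w i * a i) ^ r * (t⁻¹) ^ r) * t ^ r := by ring
      _ ≤ ((∑ i ∈ s, w i * a i ^ r) * t⁻¹) * t ^ r := mul_le_mul_left hkey _
      _ = (∑ i ∈ s, w i * a i ^ r) * (t⁻¹ * t ^ r) := by ring
      _ ≤ (∑ i ∈ s, w i * a i ^ r) * 1 := by
          refine mul_le_mul_right ?_ _
          have h1 : t ^ r ≤ t := by
            calc t ^ r ≤ t ^ (1:ℝ) := ENNReal.rpow_le_rpow_of_exponent_ge hw hr
              _ = t := ENNReal.rpow_one t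
          calc t⁻¹ * t ^ r ≤ t⁻¹ * t := mul_le_mul_right h1 _
            _ = 1 := ENNReal.inv_mul_cancel h0 htop
      _ = ∑ i ∈ s, w i * a i ^ r := mul_one _

lemma tsumJensen {ι : Type*} (w a : ι → ℝ≥0∞) (hw : ∑' i, w i = 1) {r : ℝ} (hr : 1 ≤ r) :
    (∑' i, w i * a i) ^ r ≤ ∑' i, w i * a i ^ r := by
  have hr0 : (0:ℝ) ≤ r := zero_le_one.trans hr
  rw [ENNReal.tsum_eq_iSup_sum (f := fun i => w i * a i)]
  have hmap : (⨆ s : Finset ι, ∑ i ∈ s, w i * a i) ^ r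
      = ⨆ s : Finset ι, (∑ i ∈ s, w i * a i) ^ r :=
    Monotone.map_iSup_of_continuousAt (ENNReal.continuous_rpow_const.continuousAt)
      (ENNReal.monotone_rpow_of_nonneg hr0)
      (by simp [ENNReal.zero_rpow_of_pos (lt_of_lt_of_le zero_lt_one hr)])
  rw [hmap]
  exact iSup_le fun s =>
    le_trans (finsetJensen s w a (hw ▸ ENNReal.sum_le_tsum s) hr) (ENNReal.sum_le_tsum s)

lemma killedKer_univ (x y : V) : killedKer μ Set.univ x y = μ x y / vertexWeight μ x := by
  simp [killedKer, transKer]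

lemma killedKerN_zero (x y : V) :
    killedKerN μ Set.univ 0 x y = if x = y then 1 else 0 := by
  simp [killedKerN]

lemma rowSum (hv : ∀ x : V, vertexWeight μ x ≠ 0) (hfin : ∀ x, vertexWeight μ x ≠ ⊤) :
    ∀ (n : ℕ) (x : V), ∑' y, killedKerN μ Set.univ n x y = 1 := by
  intro n
  induction n with
  | zero =>
    intro x
    rw [show (fun y => killedKerN μ Set.univ 0 x y) = fun y => if x = y then 1 else 0 from
      funext fun y => killedKerN_zero μ x y]
    rw [tsum_eq_single x (fun y hy => if_neg (fun h => hy h.symm))]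
    simp
  | succ n ih =>
    intro x
    show ∑' y, ∑' z, killedKer μ Set.univ x z * killedKerN μ Set.univ n z y = 1
    rw [ENNReal.tsum_comm]
    have hz : ∀ z : V, ∑' y, killedKer μ Set.univ x z * killedKerN μ Set.univ n z y
        = killedKer μ Set.univ x z := by
      intro z
      rw [ENNReal.tsum_mul_left, ih z, mul_one]
    rw [tsum_congr hz]
    simp only [killedKer_univ, div_eq_mul_inv]
    rw [ENNReal.tsum_mul_right, ← div_eq_mul_inv]
    exact ENNReal.div_self (hv x) (hfin x)

lemma chapman (n m : ℕ) (x y : V) :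
    killedKerN μ Set.univ (n + m) x y
      = ∑' z, killedKerN μ Set.univ n x z * killedKerN μ Set.univ m z y := by
  induction n generalizing x with
  | zero =>
    rw [Nat.zero_add]
    rw [tsum_congr (fun z => by rw [killedKerN_zero])]
    rw [tsum_eq_single x (fun z hz => by rw [if_neg (fun h => hz h.symm), zero_mul])]
    rw [if_pos rfl, one_mul]
  | succ n ih =>
    have h1 : n + 1 + m = (n + m) + 1 := by ring
    rw [h1]
    show ∑' z, killedKer μ Set.univ x z * killedKerN μ Set.univ (n + m) z y
      = ∑' z, killedKerN μ Set.univ (n + 1) x z * killedKerN μ Set.univ m z y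
    calc ∑' z, killedKer μ Set.univ x z * killedKerN μ Set.univ (n + m) z y
        = ∑' z, killedKer μ Set.univ x z
            * ∑' w, killedKerN μ Set.univ n z w * killedKerN μ Set.univ m w y :=
          tsum_congr fun z => by rw [ih z]
      _ = ∑' z, ∑' w, killedKer μ Set.univ x z
            * (killedKerN μ Set.univ n z w * killedKerN μ Set.univ m w y) :=
          tsum_congr fun z => by rw [ENNReal.tsum_mul_left]
      _ = ∑' w, ∑' z, (killedKer μ Set.univ x z * killedKerN μ Set.univ n z w)
            * killedKerN μ Set.univ m w y := by
          rw [ENNReal.tsum_comm]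
          exact tsum_congr fun w => tsum_congr fun z => by ring
      _ = ∑' w, (∑' z, killedKer μ Set.univ x z * killedKerN μ Set.univ n z w)
            * killedKerN μ Set.univ m w y :=
          tsum_congr fun w => by rw [ENNReal.tsum_mul_right]
      _ = ∑' w, killedKerN μ Set.univ (n + 1) x w * killedKerN μ Set.univ m w y := rfl

end Aux

/-- for `1 < p ≤ 2` with conjugate `q` and vertex weights bounded below
by `b > 0`, the `L^q`-Green function satisfies
`g_q(o,o) ≥ ∑_{n=0}^∞ (∑_{m=n}^∞ p_m(o,o))^{q−1}`,
where `p_m(o,o) = P_m(o,o)/μ(o)` is the on-diagonal heat kernel. -/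
theorem greenQ_diagonal_lower_bound {V : Type*}
    (μ : V → V → ℝ≥0∞)
    (hsym : ∀ x y, μ x y = μ y x)
    (hloc : LocallyFinite' μ)
    (hfin : ∀ x, vertexWeight μ x < ⊤)
    (b : ℝ≥0∞) (hb : 0 < b) (hbv : ∀ x, b ≤ vertexWeight μ x)
    (p q : ℝ) (hp1 : 1 < p) (hp2 : p ≤ 2) (hpq : 1 / p + 1 / q = 1)
    (o : V) :
    ∑' n : ℕ, (∑' m : ℕ, killedKerN μ Set.univ (n + m) o o / vertexWeight μ o) ^ (q - 1) ≤
      greenQ μ q o o := by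
  classical
  have hv0 : ∀ x, vertexWeight μ x ≠ 0 := fun x => (lt_of_lt_of_le hb (hbv x)).ne'
  have hvt : ∀ x, vertexWeight μ x ≠ ⊤ := fun x => (hfin x).ne
  have hp0 : (0:ℝ) < p := lt_trans one_pos hp1
  have h1p : 1 / p < 1 := by rw [div_lt_one hp0]; exact hp1
  have h1qpos : 0 < 1 / q := by linarith
  have hq0 : 0 < q := one_div_pos.mp h1qpos
  have h1q : 1 / q ≤ 1 / 2 := by
    have := one_div_le_one_div_of_le hp0 hp2
    linarith
  have hq2 : 2 ≤ q := by
    have h2 := (div_le_div_iff₀ hq0 (by norm_num : (0:ℝ) < 2)).mp h1q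
    linarith
  have hr : (1:ℝ) ≤ q - 1 := by linarith
  have hterm : ∀ z, green μ o z * green μ z o ^ (q - 1) * vertexWeight μ z
      = ∑' n : ℕ, killedKerN μ Set.univ n o z * green μ z o ^ (q - 1) := by
    intro z
    rw [green, greenKilled, ← ENNReal.tsum_mul_right, ← ENNReal.tsum_mul_right]
    refine tsum_congr fun n => ?_
    rw [mul_right_comm, ENNReal.div_mul_cancel (hv0 z) (hvt z)]
  have hG : greenQ μ q o o
      = ∑' n : ℕ, ∑' z, killedKerN μ Set.univ n o z * green μ z o ^ (q - 1) := by
    rw [greenQ, tsum_congr hterm, ENNReal.tsum_comm]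
  have hmean : ∀ n : ℕ, ∑' z, killedKerN μ Set.univ n o z * green μ z o
      = ∑' m : ℕ, killedKerN μ Set.univ (n + m) o o / vertexWeight μ o := by
    intro n
    calc ∑' z, killedKerN μ Set.univ n o z * green μ z o
        = ∑' z, ∑' m : ℕ, killedKerN μ Set.univ n o z
            * (killedKerN μ Set.univ m z o / vertexWeight μ o) := by
          refine tsum_congr fun z => ?_
          rw [green, greenKilled, ENNReal.tsum_mul_left]
      _ = ∑' m : ℕ, ∑' z, (killedKerN μ Set.univ n o z * killedKerN μ Set.univ m z o)
            * (vertexWeight μ o)⁻¹ := by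
          rw [ENNReal.tsum_comm]
          exact tsum_congr fun m => tsum_congr fun z => by
            rw [div_eq_mul_inv, mul_assoc]
      _ = ∑' m : ℕ, (∑' z, killedKerN μ Set.univ n o z * killedKerN μ Set.univ m z o)
            * (vertexWeight μ o)⁻¹ :=
          tsum_congr fun m => by rw [ENNReal.tsum_mul_right]
      _ = ∑' m : ℕ, killedKerN μ Set.univ (n + m) o o / vertexWeight μ o :=
          tsum_congr fun m => by rw [← chapman, div_eq_mul_inv]
  rw [hG]
  refine ENNReal.tsum_le_tsum fun n => ?_
  rw [← hmean n]
  exact tsumJensen (fun z => killedKerN μ Set.univ n o z) (fun z => green μ z o)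
    (rowSum μ hv0 hvt n o) hr
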